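/- For all p ∈ (0,1), the point ((3p − p³)/3, −(1/3)log((1−p)²(1+p))) lies on or below the piecewise-linear upper envelope of the three points ((1−(1−p)^a + (3−a)p)/3, −(a/3)log(1−p)) for a = 1, 2, 3 in the (τ,λ) plane. -/

import Mathlib

open Real Set

private lemma key_mono : MonotoneOn (fun p : ℝ => Real.log (1+p) + (1-p)*Real.log (1-p)) (Ico 0 1) := by
  apply monotoneOn_of_deriv_nonneg (convex_Ico 0 1)
  · apply ContinuousOn.add
    · apply ContinuousOn.log (by fun_prop)
      intro x hx; simp only [mem_Ico] at hx; nlinarith [hx.1]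
    · apply ContinuousOn.mul (by fun_prop)
      apply ContinuousOn.log (by fun_prop)
      intro x hx; simp only [mem_Ico] at hx; nlinarith [hx.2]
  · rw [interior_Ico]
    intro x hx
    obtain ⟨hx0, hx1⟩ := hx
    have h1 : (1:ℝ) + x ≠ 0 := by nlinarith
    have h2 : (1:ℝ) - x ≠ 0 := by nlinarith
    have d1 : HasDerivAt (fun p : ℝ => Real.log (1+p)) (1/(1+x)) x := by
      have := ((hasDerivAt_id x).const_add 1).log h1
      simpa using this
    have d2 : HasDerivAt (fun p : ℝ => (1-p)*Real.log (1-p))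
        ((-1)*Real.log (1-x) + (1-x)*((-1)/(1-x))) x := by
      have hlin : HasDerivAt (fun p : ℝ => 1 - p) (-1) x := by
        simpa using ((hasDerivAt_id x).const_sub 1)
      exact hlin.mul (hlin.log h2)
    exact (d1.add d2).differentiableAt.differentiableWithinAt
  · rw [interior_Ico]
    intro x hx
    obtain ⟨hx0, hx1⟩ := hx
    have h1 : (0:ℝ) < 1 + x := by linarith
    have h2 : (0:ℝ) < 1 - x := by linarith
    have d1 : HasDerivAt (fun p : ℝ => Real.log (1+p)) (1/(1+x)) x := by
      have := ((hasDerivAt_id x).const_add 1).log h1.ne'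
      simpa using this
    have d2 : HasDerivAt (fun p : ℝ => (1-p)*Real.log (1-p))
        ((-1)*Real.log (1-x) + (1-x)*((-1)/(1-x))) x := by
      have hlin : HasDerivAt (fun p : ℝ => 1 - p) (-1) x := by
        simpa using ((hasDerivAt_id x).const_sub 1)
      exact hlin.mul (hlin.log h2.ne')
    have hd : deriv (fun p : ℝ => Real.log (1+p) + (1-p)*Real.log (1-p)) x = _ := (d1.add d2).deriv
    rw [hd]
    have hlog : Real.log (1-x) ≤ -x := by
      have := Real.log_le_sub_one_of_pos h2
      linarith
    have hcancel : (1-x)*((-1)/(1-x)) = -1 := by field_simp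
    rw [hcancel]
    have hinv : 1 - x ≤ 1/(1+x) := by
      rw [le_div_iff₀ h1]; nlinarith
    nlinarith

private lemma key_ineq {p : ℝ} (hp0 : 0 < p) (hp1 : p < 1) :
    -(1-p) * Real.log (1-p) ≤ Real.log (1+p) := by
  have h := key_mono (a := 0) (b := p) (by simp) (by constructor <;> linarith) hp0.le
  simp only at h
  norm_num at h
  linarith

theorem stmt18 (p : ℝ) (hp0 : 0 < p) (hp1 : p < 1) :
    ∃ w₁ w₂ w₃ : ℝ, 0 ≤ w₁ ∧ 0 ≤ w₂ ∧ 0 ≤ w₃ ∧ w₁ + w₂ + w₃ = 1 ∧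
      w₁ * ((1 - (1 - p) ^ 1 + 2 * p) / 3) + w₂ * ((1 - (1 - p) ^ 2 + 1 * p) / 3) +
          w₃ * ((1 - (1 - p) ^ 3 + 0 * p) / 3) = (3 * p - p ^ 3) / 3 ∧
      -(1 / 3) * Real.log ((1 - p) ^ 2 * (1 + p)) ≤
        w₁ * (-(1 / 3) * Real.log (1 - p)) + w₂ * (-(2 / 3) * Real.log (1 - p)) +
          w₃ * (-Real.log (1 - p)) := by
  refine ⟨1 - p, p, 0, by linarith, hp0.le, le_refl 0, by ring, by ring, ?_⟩
  have h1 : (0:ℝ) < 1 - p := by linarith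
  have h2 : (0:ℝ) < 1 + p := by linarith
  rw [Real.log_mul (by positivity) h2.ne', Real.log_pow]
  have := key_ineq hp0 hp1
  push_cast
  nlinarith [this]
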